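/- Let h be an N×N real symmetric tridiagonal centrosymmetric matrix with positive off-diagonal entries and eigenvalues λ_1 > λ_2 > … > λ_N, and for each n let v^{(n)} be a unit-norm real eigenvector of h for λ_n. Then there exists a constant R > 0 such that for every n, (v^{(n)}_1)² = (−1)^{n+1}·R / ∏_{m ≠ n} (λ_n − λ_m), where v^{(n)}_1 is the first component of v^{(n)}. -/

import Mathlib

open Polynomial

private lemma jac_aux_zero {M : ℕ} (h : Matrix (Fin (M+1)) (Fin (M+1)) ℝ)
    (htri : ∀ i j : Fin (M+1), (i : ℕ) + 1 < (j : ℕ) ∨ (j : ℕ) + 1 < (i : ℕ) → h i j = 0)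
    (hoffpos : ∀ i j : Fin (M+1), (i : ℕ) + 1 = (j : ℕ) → 0 < h i j)
    (μ : ℝ) (u : Fin (M+1) → ℝ) (hu : h.mulVec u = μ • u) (h0 : u 0 = 0) : u = 0 := by
  have key : ∀ k : ℕ, ∀ hk : k < M+1, u ⟨k, hk⟩ = 0 := by
    intro k
    induction k using Nat.strong_induction_on with
    | _ k ih =>
      intro hk
      match k, hk with
      | 0, hk => exact h0
      | k+1, hk =>
        have hk' : k < M + 1 := by omega
        have hrow : (h.mulVec u) ⟨k, hk'⟩ = 0 := by
          rw [hu]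
          simp [ih k (by omega) hk']
        have hsum : (h.mulVec u) ⟨k, hk'⟩ = h ⟨k, hk'⟩ ⟨k+1, hk⟩ * u ⟨k+1, hk⟩ := by
          show ∑ j, h ⟨k, hk'⟩ j * u j = _
          refine Finset.sum_eq_single (⟨k+1, hk⟩ : Fin (M+1)) ?_ (by simp)
          intro j _ hj
          rcases lt_or_ge (j : ℕ) (k+1) with hlt | hge
          · have := ih j (by omega) j.isLt
            simp only [Fin.eta] at this
            rw [this, mul_zero]
          · have : (k : ℕ) + 1 < (j : ℕ) := by
              rcases hge.lt_or_eq with h1 | h1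
              · exact h1
              · exact absurd (Fin.ext h1.symm) hj
            rw [htri _ _ (Or.inl this), zero_mul]
        have hpos := hoffpos ⟨k, hk'⟩ ⟨k+1, hk⟩ rfl
        have := hsum ▸ hrow
        exact (mul_eq_zero.mp this).resolve_left (ne_of_gt hpos)
  funext i
  simpa [Fin.eta] using key i.val i.isLt

private lemma jac_aux_band {M : ℕ} (h : Matrix (Fin (M+1)) (Fin (M+1)) ℝ)
    (htri : ∀ i j : Fin (M+1), (i : ℕ) + 1 < (j : ℕ) ∨ (j : ℕ) + 1 < (i : ℕ) → h i j = 0) :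
    ∀ k : ℕ, ∀ j : Fin (M+1), k < (j : ℕ) → (h ^ k) 0 j = 0 := by
  intro k
  induction k with
  | zero =>
    intro j hj
    have : j ≠ 0 := by
      intro hj0; rw [hj0] at hj; simp at hj
    simp [Matrix.one_apply]
    intro hc; exact absurd hc.symm this
  | succ k ih =>
    intro j hj
    rw [pow_succ, Matrix.mul_apply]
    refine Finset.sum_eq_zero fun l _ => ?_
    rcases lt_or_ge (k : ℕ) (l : ℕ) with hl | hl
    · rw [ih l hl, zero_mul]
    · rw [htri l j (Or.inl (by omega)), mul_zero]

private lemma jac_aux_diag {M : ℕ} (h : Matrix (Fin (M+1)) (Fin (M+1)) ℝ)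
    (htri : ∀ i j : Fin (M+1), (i : ℕ) + 1 < (j : ℕ) ∨ (j : ℕ) + 1 < (i : ℕ) → h i j = 0) :
    ∀ k : ℕ, ∀ hk : k < M+1, (h ^ k) 0 ⟨k, hk⟩
      = ∏ i ∈ Finset.range k, (if hi : i + 1 < M + 1 then h ⟨i, by omega⟩ ⟨i+1, hi⟩ else 1) := by
  have hband := jac_aux_band h htri
  intro k
  induction k with
  | zero => intro hk; simp [Matrix.one_apply]
  | succ k ih =>
    intro hk
    have hk' : k < M + 1 := by omega
    rw [pow_succ, Matrix.mul_apply, Finset.prod_range_succ, ← ih hk']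
    rw [Finset.sum_eq_single (⟨k, hk'⟩ : Fin (M+1))]
    · rw [dif_pos hk]
    · intro l _ hl
      rcases lt_or_ge (k : ℕ) (l : ℕ) with h1 | h1
      · rw [hband k l h1, zero_mul]
      · have : (l : ℕ) < k := by
          rcases h1.lt_or_eq with h2 | h2
          · exact h2
          · exact absurd (Fin.ext h2) hl
        rw [htri l ⟨k+1, hk⟩ (Or.inl (by simp; omega)), mul_zero]
    · simp

private lemma jac_aux_spectral {M : ℕ} (h : Matrix (Fin (M+1)) (Fin (M+1)) ℝ) (hsym : h.IsSymm)
    (lam : Fin (M+1) → ℝ) (hinj : Function.Injective lam)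
    (v : Fin (M+1) → Fin (M+1) → ℝ)
    (hunit : ∀ n, ∑ i, (v n i) ^ 2 = 1)
    (heig : ∀ n, h.mulVec (v n) = lam n • v n) :
    ∀ (k : ℕ) (i j : Fin (M+1)), (h ^ k) i j = ∑ n, lam n ^ k * (v n i * v n j) := by
  set V : Matrix (Fin (M+1)) (Fin (M+1)) ℝ := Matrix.of (fun n i => v n i) with hV
  have hVVt : V * V.transpose = 1 := by
    ext m n
    rw [Matrix.mul_apply]
    simp only [hV, Matrix.transpose_apply, Matrix.of_apply, Matrix.one_apply]
    by_cases hmn : m = n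
    · subst hmn
      simp only [if_pos rfl]
      have := hunit m
      simpa [sq] using this
    · rw [if_neg hmn]
      have e1 : dotProduct (h.mulVec (v m)) (v n) = lam m * dotProduct (v m) (v n) := by
        rw [heig]; simp [smul_dotProduct]
      have e2 : dotProduct (h.mulVec (v m)) (v n) = lam n * dotProduct (v m) (v n) := by
        rw [dotProduct_comm, Matrix.dotProduct_mulVec, ← Matrix.mulVec_transpose,
          hsym, heig]
        simp [smul_dotProduct, dotProduct_comm (v n) (v m)]
      have : (lam m - lam n) * dotProduct (v m) (v n) = 0 := by linarith [e1, e2]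
      have hl : lam m ≠ lam n := fun hc => hmn (hinj hc)
      have := (mul_eq_zero.mp this).resolve_left (sub_ne_zero_of_ne hl)
      simpa [dotProduct] using this
  have hVtV : V.transpose * V = 1 := mul_eq_one_comm.mp hVVt
  have hVh : V * h = Matrix.diagonal lam * V := by
    ext n j
    rw [Matrix.mul_apply]
    have : ∑ i, V n i * h i j = ∑ i, h j i * v n i := by
      refine Finset.sum_congr rfl fun i _ => ?_
      rw [hsym.apply i j]; simp only [hV, Matrix.of_apply]; ring
    rw [this]
    have : ∑ i, h j i * v n i = (h.mulVec (v n)) j := rfl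
    rw [this, heig]
    simp [Matrix.diagonal_mul, hV, Matrix.mul_apply, Matrix.diagonal_apply,
      Finset.sum_ite_eq]
  have hpow : ∀ k : ℕ, h ^ k = V.transpose * (Matrix.diagonal (fun n => lam n ^ k) * V) := by
    intro k
    induction k with
    | zero =>
      simp only [pow_zero]
      have : (Matrix.diagonal fun _ : Fin (M+1) => (1:ℝ)) = 1 := by
        ext i j; simp [Matrix.diagonal_apply, Matrix.one_apply]
      rw [this, Matrix.one_mul, hVtV]
    | succ k ih =>
      rw [pow_succ, ih]
      have h1 : h = V.transpose * (Matrix.diagonal lam * V) := by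
        calc h = (V.transpose * V) * h := by rw [hVtV, Matrix.one_mul]
        _ = V.transpose * (V * h) := by rw [Matrix.mul_assoc]
        _ = V.transpose * (Matrix.diagonal lam * V) := by rw [hVh]
      conv_lhs => rw [h1]
      have : ∀ A B : Matrix (Fin (M+1)) (Fin (M+1)) ℝ,
          (V.transpose * (A * V)) * (V.transpose * (B * V))
            = V.transpose * ((A * B) * V) := by
        intro A B
        calc (V.transpose * (A * V)) * (V.transpose * (B * V))
            = V.transpose * (A * ((V * V.transpose) * (B * V))) := by
              simp only [Matrix.mul_assoc]
        _ = V.transpose * ((A * B) * V) := by rw [hVVt, Matrix.one_mul, Matrix.mul_assoc]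
      rw [this, Matrix.diagonal_mul_diagonal]
      have hd : (fun i => lam i ^ k * lam i) = fun n => lam n ^ (k+1) := by
        funext n; rw [pow_succ]
      rw [hd]
  intro k i j
  rw [hpow k, Matrix.mul_apply]
  refine Finset.sum_congr rfl fun n _ => ?_
  rw [Matrix.diagonal_mul]
  simp only [hV, Matrix.transpose_apply, Matrix.of_apply]
  ring

private lemma jac_aux_centro {M : ℕ} (h : Matrix (Fin (M+1)) (Fin (M+1)) ℝ)
    (hcs : ∀ i j : Fin (M+1), h i j = h i.rev j.rev)
    (hzero : ∀ (μ : ℝ) (u : Fin (M+1) → ℝ), h.mulVec u = μ • u → u 0 = 0 → u = 0)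
    (μ : ℝ) (u : Fin (M+1) → ℝ) (hu : h.mulVec u = μ • u) (h0 : u 0 ≠ 0) :
    ∃ ε : ℝ, ε ^ 2 = 1 ∧ ∀ i, u i.rev = ε * u i := by
  set w : Fin (M+1) → ℝ := fun i => u i.rev with hw
  have hweig : h.mulVec w = μ • w := by
    funext i
    have : (h.mulVec w) i = ∑ j, h i j * u j.rev := rfl
    rw [this]
    have e1 : ∑ j : Fin (M+1), h i j * u j.rev
        = ∑ j : Fin (M+1), h i.rev j.rev * u j.rev := by
      refine Finset.sum_congr rfl fun j _ => by rw [hcs i j]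
    have e2 : ∑ j : Fin (M+1), h i.rev j.rev * u j.rev = ∑ j, h i.rev j * u j := by
      exact Fintype.sum_equiv (Equiv.mk Fin.rev Fin.rev Fin.rev_rev Fin.rev_rev)
        _ _ (fun j => rfl)
    rw [e1, e2]
    have : ∑ j, h i.rev j * u j = (h.mulVec u) i.rev := rfl
    rw [this, hu]
    rfl
  set c : ℝ := w 0 / u 0 with hc
  have hdiff : h.mulVec (w - c • u) = μ • (w - c • u) := by
    rw [Matrix.mulVec_sub, Matrix.mulVec_smul, hu, hweig, smul_sub, smul_comm]
  have hd0 : (w - c • u) 0 = 0 := by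
    show w 0 - c * u 0 = 0
    rw [hc]
    field_simp
    ring
  have hz := hzero μ _ hdiff hd0
  have hwc : ∀ i, w i = c * u i := by
    intro i
    have h' := congrFun hz i
    have h'' : w i - c * u i = 0 := h'
    linarith
  have h1 : u (Fin.rev 0) = c * u 0 := hwc 0
  have h2 : u 0 = c * u (Fin.rev 0) := by
    have := hwc (Fin.rev 0)
    simpa [hw, Fin.rev_rev] using this
  have hc2 : c ^ 2 = 1 := by
    have hx : u 0 = c * (c * u 0) := by
      calc u 0 = c * u (Fin.rev 0) := h2
      _ = c * (c * u 0) := by rw [h1]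
    have hy : (c ^ 2 - 1) * u 0 = 0 := by linear_combination (-1 : ℝ) * hx
    rcases mul_eq_zero.mp hy with h' | h'
    · linarith
    · exact absurd h' h0
  exact ⟨c, hc2, fun i => hwc i⟩

private lemma jac_aux_sign {M : ℕ} (lam : Fin (M+1) → ℝ) (hdec : StrictAnti lam)
    (n : Fin (M+1)) :
    0 < (-1 : ℝ) ^ (n : ℕ) * ∏ m ∈ Finset.univ.erase n, (lam n - lam m) := by
  have hsplit : Finset.univ.erase n = Finset.Iio n ∪ Finset.Ioi n := by
    ext m
    simp only [Finset.mem_erase, Finset.mem_univ, and_true, Finset.mem_union,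
      Finset.mem_Iio, Finset.mem_Ioi]
    exact ⟨fun hm => hm.lt_or_gt, fun hm => hm.elim ne_of_lt ne_of_gt⟩
  have hdisj : Disjoint (Finset.Iio n) (Finset.Ioi n) := by
    rw [Finset.disjoint_left]
    intro m hm hm'
    simp only [Finset.mem_Iio] at hm
    simp only [Finset.mem_Ioi] at hm'
    exact absurd (hm.trans hm') (lt_irrefl m)
  rw [hsplit, Finset.prod_union hdisj]
  have hcard : (Finset.Iio n).card = (n : ℕ) := Fin.card_Iio n
  have key : (-1 : ℝ) ^ (n : ℕ) * ∏ m ∈ Finset.Iio n, (lam n - lam m)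
      = ∏ m ∈ Finset.Iio n, (lam m - lam n) := by
    rw [← hcard, ← Finset.prod_const (-1 : ℝ), ← Finset.prod_mul_distrib]
    exact Finset.prod_congr rfl fun m _ => by ring
  have h1 : 0 < ∏ m ∈ Finset.Iio n, (lam m - lam n) := by
    refine Finset.prod_pos fun m hm => ?_
    rw [Finset.mem_Iio] at hm
    linarith [hdec hm]
  have h2 : 0 < ∏ m ∈ Finset.Ioi n, (lam n - lam m) := by
    refine Finset.prod_pos fun m hm => ?_
    rw [Finset.mem_Ioi] at hm
    linarith [hdec hm]
  calc (0:ℝ) < (∏ m ∈ Finset.Iio n, (lam m - lam n)) * ∏ m ∈ Finset.Ioi n, (lam n - lam m) :=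
        mul_pos h1 h2
  _ = (-1 : ℝ) ^ (n : ℕ) * ((∏ m ∈ Finset.Iio n, (lam n - lam m))
        * ∏ m ∈ Finset.Ioi n, (lam n - lam m)) := by
        rw [← key]; ring

/-- For a centrosymmetric Jacobi matrix, the squared first components of the unit eigenvectors
are `(-1)^(n+1) R / ∏_{m ≠ n} (λ_n - λ_m)` for some constant `R > 0`
(here `n` is 1-indexed, so with 0-indexed `n` the sign is `(-1)^n`). -/
theorem centrosymmetric_jacobi_first_component
    (N : ℕ) (hN : 0 < N) (h : Matrix (Fin N) (Fin N) ℝ)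
    (hsym : h.IsSymm)
    (htri : ∀ i j : Fin N, (i : ℕ) + 1 < (j : ℕ) ∨ (j : ℕ) + 1 < (i : ℕ) → h i j = 0)
    (hoffpos : ∀ i j : Fin N, (i : ℕ) + 1 = (j : ℕ) → 0 < h i j)
    (hcs : ∀ i j : Fin N, h i j = h i.rev j.rev)
    (lam : Fin N → ℝ) (hdec : StrictAnti lam)
    (hspec : h.charpoly = ∏ n : Fin N, (X - C (lam n)))
    (v : Fin N → Fin N → ℝ)
    (hunit : ∀ n, ∑ i, (v n i) ^ 2 = 1)
    (heig : ∀ n, h.mulVec (v n) = lam n • v n) :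
    ∃ R : ℝ, 0 < R ∧ ∀ n : Fin N,
      (v n (⟨0, hN⟩ : Fin N)) ^ 2
        = (-1) ^ (n : ℕ) * R / ∏ m ∈ Finset.univ.erase n, (lam n - lam m) := by
  obtain ⟨M, rfl⟩ : ∃ M, N = M + 1 := ⟨N - 1, by omega⟩
  have hzero := jac_aux_zero h htri hoffpos
  have hband := jac_aux_band h htri
  have hdiag := jac_aux_diag h htri
  have hspectral := jac_aux_spectral h hsym lam hdec.injective v hunit heig
  set B : ℝ := (h ^ M) 0 (Fin.last M) with hB
  have hBpos : 0 < B := by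
    rw [hB, show (Fin.last M) = ⟨M, by omega⟩ from rfl, hdiag M (by omega)]
    refine Finset.prod_pos fun i hi => ?_
    rw [Finset.mem_range] at hi
    split_ifs with hcnd
    · exact hoffpos _ _ rfl
    · exact one_pos
  -- moments
  have hmom : ∀ k : ℕ, k ≤ M →
      ∑ n, (v n 0 * v n (Fin.last M)) * lam n ^ k = if k = M then B else 0 := by
    intro k hk
    have hsp := hspectral k 0 (Fin.last M)
    have hsum : ∑ n, (v n 0 * v n (Fin.last M)) * lam n ^ k = (h ^ k) 0 (Fin.last M) := by
      rw [hsp]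
      exact Finset.sum_congr rfl fun n _ => by ring
    rw [hsum]
    rcases eq_or_lt_of_le hk with rfl | hlt
    · rw [if_pos rfl, hB]
    · rw [if_neg (by omega)]
      exact hband k (Fin.last M) (by simp [Fin.val_last]; omega)
  -- key interpolation identity
  have hkey : ∀ j : Fin (M+1),
      (v j 0 * v j (Fin.last M)) * (∏ m ∈ Finset.univ.erase j, (lam j - lam m)) = B := by
    intro j
    set g : ℝ[X] := ∏ m ∈ Finset.univ.erase j, (X - C (lam m)) with hg
    have hmonic : g.Monic := monic_prod_of_monic _ _ fun m _ => monic_X_sub_C _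
    have hdeg : g.natDegree = M := by
      rw [hg, natDegree_prod _ _ (fun m _ => X_sub_C_ne_zero _)]
      simp [natDegree_X_sub_C, Finset.card_erase_of_mem, Finset.card_univ]
    have hcoeff : g.coeff M = 1 := by
      rw [← hdeg]; exact hmonic.coeff_natDegree
    have heval0 : ∀ n, n ≠ j → g.eval (lam n) = 0 := by
      intro n hn
      rw [hg, eval_prod]
      refine Finset.prod_eq_zero (Finset.mem_erase.mpr ⟨hn, Finset.mem_univ n⟩) ?_
      simp
    have hevalj : g.eval (lam j) = ∏ m ∈ Finset.univ.erase j, (lam j - lam m) := by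
      rw [hg, eval_prod]
      exact Finset.prod_congr rfl fun m _ => by simp
    have hevalsum : ∀ n : Fin (M+1),
        g.eval (lam n) = ∑ k ∈ Finset.range (M+1), g.coeff k * lam n ^ k := by
      intro n
      exact eval_eq_sum_range' (by omega) (lam n)
    have hS1 : ∑ n, (v n 0 * v n (Fin.last M)) * g.eval (lam n)
        = (v j 0 * v j (Fin.last M)) * g.eval (lam j) :=
      Finset.sum_eq_single j (fun n _ hn => by rw [heval0 n hn, mul_zero]) (by simp)
    have hS2 : ∑ n, (v n 0 * v n (Fin.last M)) * g.eval (lam n) = B := by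
      calc ∑ n, (v n 0 * v n (Fin.last M)) * g.eval (lam n)
          = ∑ n, ∑ k ∈ Finset.range (M+1),
              g.coeff k * ((v n 0 * v n (Fin.last M)) * lam n ^ k) := by
            refine Finset.sum_congr rfl fun n _ => ?_
            rw [hevalsum n, Finset.mul_sum]
            exact Finset.sum_congr rfl fun k _ => by ring
      _ = ∑ k ∈ Finset.range (M+1),
              g.coeff k * ∑ n, (v n 0 * v n (Fin.last M)) * lam n ^ k := by
            rw [Finset.sum_comm]
            exact Finset.sum_congr rfl fun k _ => by rw [Finset.mul_sum]
      _ = ∑ k ∈ Finset.range (M+1), g.coeff k * (if k = M then B else 0) := by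
            refine Finset.sum_congr rfl fun k hk => ?_
            rw [Finset.mem_range] at hk
            rw [hmom k (by omega)]
      _ = B := by
            rw [Finset.sum_eq_single M]
            · rw [if_pos rfl, hcoeff, one_mul]
            · intro k _ hk; rw [if_neg hk, mul_zero]
            · intro hM; exact absurd (Finset.self_mem_range_succ M) hM
    rw [← hevalj, ← hS1, hS2]
  -- finish
  refine ⟨B, hBpos, fun n => ?_⟩
  have hidx : (⟨0, hN⟩ : Fin (M+1)) = 0 := rfl
  rw [hidx]
  have hv0 : v n 0 ≠ 0 := by
    intro hc
    have hvz := hzero (lam n) (v n) (heig n) hc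
    have h1 := hunit n
    rw [hvz] at h1
    simp at h1
  obtain ⟨ε, hε2, hεrev⟩ := jac_aux_centro h hcs hzero (lam n) (v n) (heig n) hv0
  have hlast : v n (Fin.last M) = ε * v n 0 := by
    have := hεrev 0
    rwa [Fin.rev_zero] at this
  have hDpos := jac_aux_sign lam hdec n
  set D : ℝ := ∏ m ∈ Finset.univ.erase n, (lam n - lam m) with hD
  have hDne : D ≠ 0 := by
    intro hc
    rw [hc, mul_zero] at hDpos
    exact lt_irrefl 0 hDpos
  have hkeyn : ε * (v n 0) ^ 2 * D = B := by
    have := hkey n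
    rw [hlast] at this
    linear_combination this
  have hv2pos : 0 < (v n 0) ^ 2 :=
    lt_of_le_of_ne (sq_nonneg _) (Ne.symm (pow_ne_zero 2 hv0))
  have hεD : 0 < ε * D := by nlinarith [hv2pos, hBpos, hkeyn]
  have hεcase : ε = 1 ∨ ε = -1 := by
    have hq : (ε - 1) * (ε + 1) = 0 := by linear_combination hε2
    rcases mul_eq_zero.mp hq with h' | h'
    · left; linarith
    · right; linarith
  have hsgn : (-1 : ℝ) ^ (n : ℕ) = ε := by
    rcases Nat.even_or_odd (n : ℕ) with he | ho
    · rw [he.neg_one_pow]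
      rcases hεcase with h' | h'
      · exact h'.symm
      · exfalso
        rw [he.neg_one_pow, one_mul] at hDpos
        rw [h'] at hεD
        linarith
    · rw [ho.neg_one_pow]
      rcases hεcase with h' | h'
      · exfalso
        rw [ho.neg_one_pow] at hDpos
        rw [h', one_mul] at hεD
        linarith
      · exact h'.symm
  rw [eq_div_iff hDne, hsgn]
  linear_combination ε * hkeyn + (-(v n 0) ^ 2 * D) * hε2
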